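/- Suppose the origin of the system ẋ = F(x) is asymptotically stable with Lyapunov function V satisfying V̇ < 0 on A \ {0} where A = {x ∈ ℝ³ : x₁ ≥ 0}, and suppose A is positively invariant. Then for every K > 0 the set {x : V(x) ≤ K} ∩ A is positively invariant and contained in the domain of attraction of the origin, and hence A itself is contained in the domain of attraction. -/

import Mathlib

/-- Key lemma: for a solution starting in the compact sublevel set
`{V ≤ K} ∩ A`, the solution stays there and converges to the origin. -/
lemma domain_of_attraction_key (F : (Fin 3 → ℝ) → (Fin 3 → ℝ)) (V : (Fin 3 → ℝ) → ℝ)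
    (A : Set (Fin 3 → ℝ))
    (hF0 : F 0 = 0) (hFlip : LocallyLipschitz F)
    (hV : ContDiff ℝ 1 V) (hV0 : V 0 = 0)
    (hVpos : ∀ x ∈ A, x ≠ 0 → 0 < V x)
    (hVdot : ∀ x ∈ A, x ≠ 0 → fderiv ℝ V x (F x) < 0)
    (hcompact : ∀ K > 0, IsCompact ({x | V x ≤ K} ∩ A))
    (hinv : ∀ x : ℝ → (Fin 3 → ℝ), (∀ t ≥ 0, HasDerivAt x (F (x t)) t) →
      x 0 ∈ A → ∀ t ≥ 0, x t ∈ A)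
    (K : ℝ) (hK : 0 < K) (x : ℝ → (Fin 3 → ℝ))
    (hx : ∀ t ≥ 0, HasDerivAt x (F (x t)) t)
    (hx0 : x 0 ∈ {y | V y ≤ K} ∩ A) :
    (∀ t ≥ 0, x t ∈ {y | V y ≤ K} ∩ A) ∧
      Filter.Tendsto x Filter.atTop (nhds 0) := by
  have hVnonneg : ∀ y ∈ A, 0 ≤ V y := by
    intro y hy
    by_cases h : y = 0
    · simp [h, hV0]
    · exact (hVpos y hy h).le
  have hxA : ∀ t ≥ 0, x t ∈ A := hinv x hx hx0.2
  -- derivative of V ∘ x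
  have hVd : ∀ t ∈ Set.Ici (0:ℝ),
      HasDerivAt (fun s => V (x s)) (fderiv ℝ V (x t) (F (x t))) t := by
    intro t ht
    exact ((hV.differentiable one_ne_zero (x t)).hasFDerivAt).comp_hasDerivAt t (hx t ht)
  have hder_nonpos : ∀ t ∈ Set.Ici (0:ℝ), fderiv ℝ V (x t) (F (x t)) ≤ 0 := by
    intro t ht
    by_cases h : x t = 0
    · rw [h, hF0]; simp
    · exact (hVdot _ (hxA t ht) h).le
  -- V ∘ x is antitone on [0, ∞)
  have hanti : AntitoneOn (fun s => V (x s)) (Set.Ici 0) := by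
    apply antitoneOn_of_deriv_nonpos (convex_Ici 0)
    · exact fun t ht => ((hVd t ht).continuousAt).continuousWithinAt
    · intro t ht
      rw [interior_Ici] at ht
      exact ((hVd t (Set.mem_Ici.mpr (Set.mem_Ioi.mp ht).le)).differentiableAt).differentiableWithinAt
    · intro t ht
      rw [interior_Ici] at ht
      rw [(hVd t (Set.mem_Ici.mpr (Set.mem_Ioi.mp ht).le)).deriv]
      exact hder_nonpos t (Set.mem_Ici.mpr (Set.mem_Ioi.mp ht).le)
  have hstay : ∀ t ≥ 0, x t ∈ {y | V y ≤ K} ∩ A := by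
    intro t ht
    refine ⟨?_, hxA t ht⟩
    have := hanti (Set.self_mem_Ici) ht ht
    exact le_trans this hx0.1
  refine ⟨hstay, ?_⟩
  -- continuity of the "Lyapunov derivative"
  have hWcont : Continuous (fun y => fderiv ℝ V y (F y)) := by
    exact (hV.continuous_fderiv one_ne_zero).clm_apply hFlip.continuous
  -- V (x t) eventually drops below any positive m
  have hdrop : ∀ m > 0, ∃ T ≥ 0, V (x T) < m := by
    intro m hm
    by_contra hcon
    push_neg at hcon
    set C : Set (Fin 3 → ℝ) := ({y | V y ≤ K} ∩ A) ∩ {y | m ≤ V y} with hC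
    have hCcomp : IsCompact C :=
      (hcompact K hK).inter_right (isClosed_le continuous_const hV.continuous)
    have hCne : C.Nonempty := ⟨x 0, hx0, hcon 0 le_rfl⟩
    obtain ⟨y0, hy0C, hy0max⟩ := hCcomp.exists_isMaxOn hCne hWcont.continuousOn
    have hy0ne : y0 ≠ 0 := by
      intro h
      have := hy0C.2
      rw [h] at this
      simp only [Set.mem_setOf_eq, hV0] at this
      linarith
    have hy0neg : fderiv ℝ V y0 (F y0) < 0 := hVdot y0 hy0C.1.2 hy0ne
    set δ := -(fderiv ℝ V y0 (F y0)) with hδ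
    have hδpos : 0 < δ := by simp [hδ]; linarith
    have hWle : ∀ t ≥ 0, fderiv ℝ V (x t) (F (x t)) ≤ -δ := by
      intro t ht
      have hxtC : x t ∈ C := ⟨hstay t ht, hcon t ht⟩
      have := hy0max hxtC
      simpa [hδ] using this
    -- φ t = V (x t) + δ t is antitone
    have hφ : AntitoneOn (fun s => V (x s) + δ * s) (Set.Ici 0) := by
      have hφd : ∀ t ∈ Set.Ici (0:ℝ),
          HasDerivAt (fun s => V (x s) + δ * s) (fderiv ℝ V (x t) (F (x t)) + δ) t := by
        intro t ht
        have h2 : HasDerivAt (fun s : ℝ => δ * s) δ t := by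
          simpa using (hasDerivAt_id t).const_mul δ
        exact (hVd t ht).add h2
      apply antitoneOn_of_deriv_nonpos (convex_Ici 0)
      · exact fun t ht => ((hφd t ht).continuousAt).continuousWithinAt
      · intro t ht
        rw [interior_Ici] at ht
        exact ((hφd t (Set.mem_Ici.mpr (Set.mem_Ioi.mp ht).le)).differentiableAt).differentiableWithinAt
      · intro t ht
        rw [interior_Ici] at ht
        rw [(hφd t (Set.mem_Ici.mpr (Set.mem_Ioi.mp ht).le)).deriv]
        have := hWle t ht.le
        linarith
    set T : ℝ := (V (x 0) - m) / δ + 1 with hT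
    have h1' : 0 ≤ (V (x 0) - m) / δ := by
      apply div_nonneg _ hδpos.le
      have := hcon 0 le_rfl
      linarith
    have hT0 : (0:ℝ) ≤ T := by rw [hT]; linarith
    have h1 : V (x T) + δ * T ≤ V (x 0) + δ * 0 :=
      hφ Set.self_mem_Ici hT0 hT0
    have h2 : m ≤ V (x T) := hcon T hT0
    have h3 : δ * T = (V (x 0) - m) + δ := by
      rw [hT, mul_add, mul_one, mul_div_cancel₀]
      exact ne_of_gt hδpos
    linarith
  -- conclude convergence
  rw [Metric.tendsto_atTop]
  intro ε hε
  set D : Set (Fin 3 → ℝ) := ({y | V y ≤ K} ∩ A) ∩ {y | ε ≤ dist y 0} with hD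
  have hDcomp : IsCompact D := by
    apply (hcompact K hK).inter_right
    exact isClosed_le continuous_const (continuous_id.dist continuous_const)
  rcases D.eq_empty_or_nonempty with hDe | hDne
  · refine ⟨0, fun t ht => ?_⟩
    by_contra h
    push_neg at h
    have : x t ∈ D := ⟨hstay t ht, h⟩
    rw [hDe] at this
    exact this
  · obtain ⟨y1, hy1D, hy1min⟩ := hDcomp.exists_isMinOn hDne hV.continuous.continuousOn
    have hy1ne : y1 ≠ 0 := by
      intro h
      have := hy1D.2
      rw [h] at this
      simp only [Set.mem_setOf_eq, dist_self] at this
      linarith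
    have hm : 0 < V y1 := hVpos y1 hy1D.1.2 hy1ne
    obtain ⟨T, hT0, hTlt⟩ := hdrop (V y1) hm
    refine ⟨T, fun t ht => ?_⟩
    have ht0 : (0:ℝ) ≤ t := le_trans hT0 ht
    have hVt : V (x t) ≤ V (x T) := hanti hT0 ht0 ht
    by_contra h
    push_neg at h
    have hxtD : x t ∈ D := ⟨hstay t ht0, h⟩
    have := hy1min hxtD
    simp only [IsMinOn, Set.mem_setOf_eq] at this
    have : V y1 ≤ V (x t) := hy1min hxtD
    linarith

theorem domain_of_attraction (F : (Fin 3 → ℝ) → (Fin 3 → ℝ)) (V : (Fin 3 → ℝ) → ℝ)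
    (A : Set (Fin 3 → ℝ)) (hA : A = {x | 0 ≤ x 0})
    (hF0 : F 0 = 0) (hFlip : LocallyLipschitz F)
    (hV : ContDiff ℝ 1 V) (hV0 : V 0 = 0)
    (hVpos : ∀ x ∈ A, x ≠ 0 → 0 < V x)
    (hVdot : ∀ x ∈ A, x ≠ 0 → fderiv ℝ V x (F x) < 0)
    (hcompact : ∀ K > 0, IsCompact ({x | V x ≤ K} ∩ A))
    (hinv : ∀ x : ℝ → (Fin 3 → ℝ), (∀ t ≥ 0, HasDerivAt x (F (x t)) t) →
      x 0 ∈ A → ∀ t ≥ 0, x t ∈ A) :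
    (∀ K > 0, ∀ x : ℝ → (Fin 3 → ℝ), (∀ t ≥ 0, HasDerivAt x (F (x t)) t) →
      x 0 ∈ {y | V y ≤ K} ∩ A →
      (∀ t ≥ 0, x t ∈ {y | V y ≤ K} ∩ A) ∧
      Filter.Tendsto x Filter.atTop (nhds 0)) ∧
    (∀ x : ℝ → (Fin 3 → ℝ), (∀ t ≥ 0, HasDerivAt x (F (x t)) t) →
      x 0 ∈ A → Filter.Tendsto x Filter.atTop (nhds 0)) := by
  constructor
  · intro K hK x hx hx0
    exact domain_of_attraction_key F V A hF0 hFlip hV hV0 hVpos hVdot hcompact hinv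
      K hK x hx hx0
  · intro x hx hx0
    have hVnn : 0 ≤ V (x 0) := by
      by_cases h : x 0 = 0
      · simp [h, hV0]
      · exact (hVpos _ hx0 h).le
    have := domain_of_attraction_key F V A hF0 hFlip hV hV0 hVpos hVdot hcompact hinv
      (V (x 0) + 1) (by linarith) x hx ⟨by simp, hx0⟩
    exact this.2
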